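/- Let c ≤ 0, d > 0 with d > |c|, and let ω*ₙ be as above. Then the spectrum-based relative period τ = (2π/ω*ₙ)/n satisfies τ = 2π/√(d² − c²) + O(n⁻²) as n → ∞. -/

import Mathlib

open Filter Asymptotics

/-- The AR(2) coefficient `φ₁,ₙ`. -/
noncomputable def phi1 (c d : ℝ) (n : ℕ) : ℝ :=
  2 * Real.exp (c / (n : ℝ)) * Real.cos (d / (n : ℝ))

/-- The AR(2) coefficient `φ₂,ₙ`. -/
noncomputable def phi2 (c : ℝ) (n : ℕ) : ℝ :=
  -Real.exp (2 * c / (n : ℝ))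

/-- The spectrum-maximizing frequency `ω*ₙ = arccos(−φ₁,ₙ(1 − φ₂,ₙ)/(4φ₂,ₙ))`. -/
noncomputable def omegaStar (c d : ℝ) (n : ℕ) : ℝ :=
  Real.arccos (-(phi1 c d n * (1 - phi2 c n)) / (4 * phi2 c n))

lemma cosh_quad_bound {x : ℝ} (hx : |x| ≤ 1) : |Real.cosh x - (1 + x ^ 2 / 2)| ≤ |x| ^ 4 := by
  have h1 := Real.exp_bound hx (n := 4) (by norm_num)
  have hx' : |(-x)| ≤ 1 := by rwa [abs_neg]
  have h2 := Real.exp_bound hx' (n := 4) (by norm_num)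
  norm_num [Finset.sum_range_succ, Nat.factorial] at h1 h2
  rw [Real.cosh_eq]
  rw [abs_le] at h1 h2 ⊢
  constructor <;> [skip; skip] <;>
    nlinarith [pow_nonneg (abs_nonneg x) 4, h1.1, h1.2, h2.1, h2.2]

lemma abs_sin_ge {x : ℝ} (hx : |x| ≤ 1) : |x| / 2 ≤ |Real.sin x| := by
  have key : ∀ y : ℝ, 0 < y → y ≤ 1 → y / 2 ≤ Real.sin y := by
    intro y hy hy1
    nlinarith [Real.sin_gt_sub_cube hy, sq_nonneg y, pow_nonneg hy.le 3]
  rcases lt_trichotomy x 0 with h | h | h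
  · have hx1 : -x ≤ 1 := by rwa [abs_of_neg h] at hx
    have := key (-x) (by linarith) hx1
    rw [Real.sin_neg] at this
    rw [abs_of_neg h]
    calc -x / 2 ≤ -Real.sin x := this
      _ ≤ |Real.sin x| := neg_le_abs _
  · simp [h]
  · have hx1 : x ≤ 1 := by rwa [abs_of_pos h] at hx
    have := key x h hx1
    rw [abs_of_pos h]
    exact this.trans (le_abs_self _)

lemma abs_pow_four (x : ℝ) : |x| ^ 4 = x ^ 4 := by
  rw [show (4 : ℕ) = 2 * 2 from rfl, pow_mul, sq_abs, ← pow_mul]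

set_option maxHeartbeats 1000000 in
/-- quantitative Taylor-type bound for `cos u * cosh v - cos w` when `w² = u² - v²`. -/
lemma stepA {u v w : ℝ} (hu : |u| ≤ 1) (hv : |v| ≤ 1) (hw : |w| ≤ 1)
    (hw2 : w ^ 2 = u ^ 2 - v ^ 2) :
    |Real.cos u * Real.cosh v - Real.cos w| ≤ 3 * (u ^ 4 + v ^ 4 + w ^ 4) + u ^ 2 * v ^ 2 := by
  have hu2 : u ^ 2 ≤ 1 := by nlinarith [sq_abs u, abs_nonneg u]
  have hv2 : v ^ 2 ≤ 1 := by nlinarith [sq_abs v, abs_nonneg v]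
  set A := Real.cos u - (1 - u ^ 2 / 2) with hA
  set B := Real.cosh v - (1 + v ^ 2 / 2) with hB
  set C := Real.cos w - (1 - w ^ 2 / 2) with hC
  have hA4 : |A| ≤ u ^ 4 := by
    have := Real.cos_bound hu
    rw [abs_pow_four] at this
    nlinarith [pow_nonneg (sq_nonneg u) 2]
  have hB4 : |B| ≤ v ^ 4 := by
    have := cosh_quad_bound hv
    rwa [abs_pow_four] at this
  have hC4 : |C| ≤ w ^ 4 := by
    have := Real.cos_bound hw
    rw [abs_pow_four] at this
    nlinarith [pow_nonneg (sq_nonneg w) 2]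
  have hu4 : u ^ 4 ≤ 1 := by nlinarith [sq_nonneg u]
  have hv4 : v ^ 4 ≤ 1 := by nlinarith [sq_nonneg v]
  have hid : Real.cos u * Real.cosh v - Real.cos w
      = A * B + A * (1 + v ^ 2 / 2) + B * (1 - u ^ 2 / 2) - C - u ^ 2 * v ^ 2 / 4 := by
    rw [hA, hB, hC]; linear_combination (1 / 2) * hw2
  have h1 : |A * B| ≤ u ^ 4 := by
    rw [abs_mul]
    calc |A| * |B| ≤ u ^ 4 * v ^ 4 :=
          mul_le_mul hA4 hB4 (abs_nonneg _) (pow_nonneg (sq_nonneg u) 2 |>.trans_eq (by ring))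
      _ ≤ u ^ 4 := by nlinarith [pow_nonneg (sq_nonneg u) 2, pow_nonneg (sq_nonneg v) 2]
  have h2 : |A * (1 + v ^ 2 / 2)| ≤ u ^ 4 * (3 / 2) := by
    rw [abs_mul, abs_of_nonneg (by nlinarith [sq_nonneg v] : (0:ℝ) ≤ 1 + v ^ 2 / 2)]
    apply mul_le_mul hA4 (by linarith) (by nlinarith [sq_nonneg v])
      (by positivity)
  have h3 : |B * (1 - u ^ 2 / 2)| ≤ v ^ 4 := by
    rw [abs_mul, abs_of_nonneg (by nlinarith [sq_nonneg u] : (0:ℝ) ≤ 1 - u ^ 2 / 2)]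
    calc |B| * (1 - u ^ 2 / 2) ≤ v ^ 4 * 1 :=
          mul_le_mul hB4 (by nlinarith [sq_nonneg u]) (by nlinarith [sq_nonneg u])
            (by positivity)
      _ = v ^ 4 := by ring
  clear_value A B C
  rw [hid]
  rw [abs_le] at h1 h2 h3 hC4
  rw [abs_le]
  constructor <;>
    linarith [h1.1, h1.2, h2.1, h2.2, h3.1, h3.2, hC4.1, hC4.2, sq_nonneg (u * v),
      pow_nonneg (sq_nonneg u) 2, pow_nonneg (sq_nonneg v) 2, pow_nonneg (sq_nonneg w) 2]

lemma omegaStar_eq (c d : ℝ) (n : ℕ) :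
    omegaStar c d n = Real.arccos (Real.cos (d / n) * Real.cosh (c / n)) := by
  unfold omegaStar phi1 phi2
  congr 1
  have h0 : Real.exp (c / n) ≠ 0 := (Real.exp_pos _).ne'
  have he : Real.exp (2 * c / n) = Real.exp (c / n) * Real.exp (c / n) := by
    rw [← Real.exp_add]; ring_nf
  rw [Real.cosh_eq, Real.exp_neg, he]
  field_simp
  ring

set_option maxHeartbeats 1000000 in
/-- Proposition 1: the spectrum-based relative period satisfies
`(2π/ω*ₙ)/n = 2π/√(d² − c²) + O(n⁻²)`. -/
theorem stmt9 (c d : ℝ) (hc : c ≤ 0) (hd : 0 < d) (hdc : |c| < d) :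
    (fun n : ℕ => (2 * Real.pi / omegaStar c d n) / (n : ℝ)
        - 2 * Real.pi / Real.sqrt (d ^ 2 - c ^ 2))
      =O[atTop] (fun n : ℕ => 1 / (n : ℝ) ^ 2) := by
  have hπ := Real.pi_pos
  have hπ3 : (3:ℝ) < Real.pi := Real.pi_gt_three
  have hc2 : c ^ 2 < d ^ 2 := by nlinarith [abs_nonneg c, sq_abs c]
  obtain ⟨a, ha, ha2⟩ : ∃ a : ℝ, 0 < a ∧ a ^ 2 = d ^ 2 - c ^ 2 :=
    ⟨Real.sqrt (d ^ 2 - c ^ 2), Real.sqrt_pos.2 (by linarith), Real.sq_sqrt (by linarith)⟩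
  have hsqrt : Real.sqrt (d ^ 2 - c ^ 2) = a := by rw [← ha2, Real.sqrt_sq ha.le]
  rw [hsqrt]
  obtain ⟨K, hKs⟩ : ∃ K : ℝ, K = 3 * d ^ 4 + 3 * c ^ 4 + 3 * a ^ 4 + d ^ 2 * c ^ 2 := ⟨_, rfl⟩
  have hK : 0 < K := by rw [hKs]; positivity
  have hden : 0 < d + |c| + 2 * a + 1 := by positivity
  obtain ⟨δ₁, hδ₁s⟩ : ∃ x : ℝ, x = 1 / (d + |c| + 2 * a + 1) := ⟨_, rfl⟩
  have hδ₁ : 0 < δ₁ := by rw [hδ₁s]; positivity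
  obtain ⟨M, hMs⟩ : ∃ x : ℝ, x = 8 * (K + 32 * a ^ 4) := ⟨_, rfl⟩
  have hKa : (0:ℝ) < K + 32 * a ^ 4 := by linarith only [hK, pow_pos ha 4]
  have hM : 0 < M := by rw [hMs]; linarith
  obtain ⟨δ₂, hδ₂s⟩ : ∃ x : ℝ, x = Real.sqrt (a ^ 2 / M) := ⟨_, rfl⟩
  have hδ₂ : 0 < δ₂ := by
    rw [hδ₂s]; exact Real.sqrt_pos.2 (div_pos (pow_pos ha 2) hM)
  obtain ⟨δ, hδs⟩ : ∃ x : ℝ, x = min δ₁ δ₂ := ⟨_, rfl⟩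
  have hδ : 0 < δ := by rw [hδs]; exact lt_min hδ₁ hδ₂
  obtain ⟨N, hN⟩ := exists_nat_gt (1 / δ)
  rw [Asymptotics.isBigO_iff]
  refine ⟨32 * Real.pi * K / a ^ 3, ?_⟩
  filter_upwards [Filter.eventually_atTop.2 ⟨N + 1, fun n hn => hn⟩] with n hn
  have hnN : (N : ℝ) < (n : ℝ) := by exact_mod_cast Nat.lt_of_succ_le hn
  have hn0 : (0 : ℝ) < (n : ℝ) := by
    have : (0:ℝ) ≤ (N:ℝ) := Nat.cast_nonneg N
    linarith
  obtain ⟨t, hts⟩ : ∃ x : ℝ, x = 1 / (n : ℝ) := ⟨_, rfl⟩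
  have ht0 : 0 < t := by rw [hts]; positivity
  have htδ : t ≤ δ := by
    have h1 : 1 / δ < (n : ℝ) := hN.trans hnN
    rw [hts, div_le_iff₀ hn0]
    rw [div_lt_iff₀ hδ] at h1
    linarith only [h1]
  have ht1 : t ≤ δ₁ := by rw [hδs] at htδ; exact htδ.trans (min_le_left _ _)
  have ht2 : t ≤ δ₂ := by rw [hδs] at htδ; exact htδ.trans (min_le_right _ _)
  have htsq : t ^ 2 ≤ a ^ 2 / M := by
    have h := pow_le_pow_left₀ ht0.le ht2 2
    rwa [hδ₂s, Real.sq_sqrt (div_nonneg (sq_nonneg a) hM.le)] at h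
  have hd1 : d * δ₁ ≤ 1 := by
    rw [hδ₁s, mul_one_div, div_le_one hden]
    have := abs_nonneg c; linarith
  have hc1 : |c| * δ₁ ≤ 1 := by
    rw [hδ₁s, mul_one_div, div_le_one hden]
    linarith
  have ha1 : 2 * (a * δ₁) ≤ 1 := by
    rw [hδ₁s, show 2 * (a * (1 / (d + |c| + 2 * a + 1))) = (2 * a) / (d + |c| + 2 * a + 1)
      from by ring, div_le_one hden]
    linarith [abs_nonneg c]
  have hdt : d * t ≤ 1 :=
    (mul_le_mul_of_nonneg_left ht1 hd.le).trans hd1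
  have hct : |c| * t ≤ 1 :=
    (mul_le_mul_of_nonneg_left ht1 (abs_nonneg c)).trans hc1
  have h2at : 2 * (a * t) ≤ 1 := by
    have h := mul_le_mul_of_nonneg_left ht1 ha.le
    linarith only [h, ha1]
  have hat0 : 0 ≤ a * t := mul_nonneg ha.le ht0.le
  have hat : a * t ≤ 1 := by linarith only [h2at, hat0]
  have habs_u : |d * t| ≤ 1 := by
    rw [abs_of_nonneg (mul_nonneg hd.le ht0.le)]; exact hdt
  have habs_v : |c * t| ≤ 1 := by rw [abs_mul, abs_of_nonneg ht0.le]; exact hct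
  have habs_w : |a * t| ≤ 1 := by rw [abs_of_nonneg hat0]; exact hat
  have hw2 : (a * t) ^ 2 = (d * t) ^ 2 - (c * t) ^ 2 := by linear_combination t ^ 2 * ha2
  have hFbound := stepA habs_u habs_v habs_w hw2
  obtain ⟨F, hFs⟩ : ∃ x : ℝ, x = Real.cos (d * t) * Real.cosh (c * t) := ⟨_, rfl⟩
  have hF' : |F - Real.cos (a * t)| ≤ K * t ^ 4 := by
    rw [hFs]
    exact hFbound.trans (le_of_eq (by rw [hKs]; ring))
  have hF2 := abs_le.1 hF'
  have cb : ∀ x : ℝ, |x| ≤ 1 →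
      1 - x ^ 2 / 2 - x ^ 4 ≤ Real.cos x ∧ Real.cos x ≤ 1 - x ^ 2 / 2 + x ^ 4 := by
    intro x hx
    have h := Real.cos_bound hx
    rw [abs_pow_four] at h
    rw [abs_le] at h
    constructor <;> linarith only [pow_nonneg (sq_nonneg x) 2, h.1, h.2]
  have hb_half : |a * t / 2| ≤ 1 := by
    rw [abs_of_nonneg (by linarith)]; linarith
  have hb_two : |2 * (a * t)| ≤ 1 := by
    rw [abs_of_nonneg (by linarith)]; exact h2at
  obtain ⟨c1l, c1u⟩ := cb (a * t / 2) hb_half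
  obtain ⟨c2l, c2u⟩ := cb (a * t) habs_w
  obtain ⟨c3l, c3u⟩ := cb (2 * (a * t)) hb_two
  have hMt : (K + 32 * a ^ 4) * t ^ 2 ≤ a ^ 2 / 8 := by
    calc (K + 32 * a ^ 4) * t ^ 2 ≤ (K + 32 * a ^ 4) * (a ^ 2 / M) :=
          mul_le_mul_of_nonneg_left htsq hKa.le
      _ = a ^ 2 / 8 := by rw [hMs]; field_simp
  have hKt4 : K * t ^ 4 + 32 * a ^ 4 * t ^ 4 ≤ a ^ 2 / 8 * t ^ 2 := by
    linarith only [mul_le_mul_of_nonneg_right hMt (sq_nonneg t)]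
  have hnn1 : (0:ℝ) ≤ a ^ 4 * t ^ 4 := by positivity
  have hnn2 : (0:ℝ) ≤ a ^ 2 * t ^ 2 := by positivity
  have hFle : F ≤ Real.cos (a * t / 2) := by linarith only [hF2.2, c2u, c1l, hKt4, hnn1, hnn2]
  have hFge : Real.cos (2 * (a * t)) ≤ F := by linarith only [hF2.1, c2l, c3u, hKt4, hnn1, hnn2]
  have hF1 : F ≤ 1 := hFle.trans (Real.cos_le_one _)
  have hFm1 : (-1:ℝ) ≤ F := (Real.neg_one_le_cos _).trans hFge
  have hwn : omegaStar c d n = Real.arccos F := by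
    rw [omegaStar_eq, hFs, show d / (n:ℝ) = d * t from by rw [hts]; ring,
      show c / (n:ℝ) = c * t from by rw [hts]; ring]
  have anti : ∀ x y : ℝ, x ≤ y → Real.arccos y ≤ Real.arccos x := by
    intro x y hxy
    simp only [Real.arccos_eq_pi_div_two_sub_arcsin]
    have := Real.monotone_arcsin hxy
    linarith
  have hω_ge : a * t / 2 ≤ Real.arccos F := by
    calc a * t / 2 = Real.arccos (Real.cos (a * t / 2)) :=
          (Real.arccos_cos (by linarith only [hat0]) (by linarith only [hat, hπ3])).symm
      _ ≤ Real.arccos F := anti _ _ hFle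
  have hω_le : Real.arccos F ≤ 2 * (a * t) := by
    calc Real.arccos F ≤ Real.arccos (Real.cos (2 * (a * t))) := anti _ _ hFge
      _ = 2 * (a * t) := Real.arccos_cos (by linarith only [hat0]) (by linarith only [h2at, hπ3])
  have hω0 : 0 < Real.arccos F := by
    have h : 0 < a * t / 2 := by positivity
    linarith only [h, hω_ge]
  have hcosω : Real.cos (Real.arccos F) = F := Real.cos_arccos hFm1 hF1
  have hkey : a * |Real.arccos F - a * t| ≤ 8 * K * t ^ 3 := by
    obtain ⟨θ₁, hθ₁⟩ : ∃ x : ℝ, x = (Real.arccos F + a * t) / 2 := ⟨_, rfl⟩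
    obtain ⟨θ₂, hθ₂⟩ : ∃ x : ℝ, x = (Real.arccos F - a * t) / 2 := ⟨_, rfl⟩
    have hid : Real.cos (Real.arccos F) - Real.cos (a * t)
        = -2 * Real.sin θ₁ * Real.sin θ₂ := by
      rw [hθ₁, hθ₂]; exact Real.cos_sub_cos _ _
    have hθ₁0 : 0 ≤ θ₁ := by
      rw [hθ₁]; linarith only [Real.arccos_nonneg F, hat0]
    have hθ₁b : |θ₁| ≤ 1 := by
      rw [abs_of_nonneg hθ₁0, hθ₁]
      linarith only [hω_le, h2at, hat0]
    have hθ₂b : |θ₂| ≤ 1 := by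
      rw [hθ₂, abs_le]
      constructor
      · linarith only [hω_ge, hat, hat0]
      · linarith only [hω_le, hat, hat0]
    have hs₁ := abs_sin_ge hθ₁b
    have hs₂ := abs_sin_ge hθ₂b
    have h2 : 2 * |Real.sin θ₁| * |Real.sin θ₂| ≤ K * t ^ 4 := by
      calc 2 * |Real.sin θ₁| * |Real.sin θ₂| = |(-2) * Real.sin θ₁ * Real.sin θ₂| := by
            rw [abs_mul, abs_mul]; norm_num
        _ = |F - Real.cos (a * t)| := by rw [← hid, hcosω]
        _ ≤ K * t ^ 4 := hF'
    have hθ₁l : a * t / 4 ≤ |Real.sin θ₁| := by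
      rw [abs_of_nonneg hθ₁0] at hs₁
      have h34 : 3 * (a * t) / 4 ≤ θ₁ := by rw [hθ₁]; linarith only [hω_ge]
      linarith only [hs₁, h34, hat0]
    have hθ₂l : |Real.arccos F - a * t| / 4 ≤ |Real.sin θ₂| := by
      have he : |θ₂| = |Real.arccos F - a * t| / 2 := by
        rw [hθ₂, abs_div]; norm_num
      rw [he] at hs₂
      linarith only [hs₂]
    have hprod : (a * t / 4) * (|Real.arccos F - a * t| / 4)
        ≤ |Real.sin θ₁| * |Real.sin θ₂| :=
      mul_le_mul hθ₁l hθ₂l (by positivity) (abs_nonneg _)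
    have h3 : a * |Real.arccos F - a * t| * t ≤ 8 * K * t ^ 3 * t := by
      linarith only [h2, hprod]
    exact le_of_mul_le_mul_right h3 ht0
  -- final computation
  have hωne : Real.arccos F ≠ 0 := hω0.ne'
  have hane : a ≠ 0 := ha.ne'
  have hnne : (n : ℝ) ≠ 0 := hn0.ne'
  have htne : t ≠ 0 := ht0.ne'
  have hEeq : 2 * Real.pi / omegaStar c d n / (n:ℝ) - 2 * Real.pi / a
      = 2 * Real.pi * (a * t - Real.arccos F) / (Real.arccos F * a) := by
    rw [hwn, hts]
    field_simp
  simp only [Real.norm_eq_abs]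
  rw [hEeq]
  have habs2 : |1 / (n:ℝ) ^ 2| = t ^ 2 := by
    rw [abs_of_nonneg (by positivity), hts]; ring
  rw [habs2]
  have hnum : 2 * Real.pi * |a * t - Real.arccos F| ≤ 2 * Real.pi * (8 * K * t ^ 3 / a) := by
    apply mul_le_mul_of_nonneg_left _ (by linarith)
    rw [le_div_iff₀ ha]
    calc |a * t - Real.arccos F| * a = a * |Real.arccos F - a * t| := by
          rw [abs_sub_comm]; ring
      _ ≤ 8 * K * t ^ 3 := hkey
  have hden1 : 0 < a * t / 2 * a := by positivity
  have hden2 : a * t / 2 * a ≤ Real.arccos F * a := mul_le_mul_of_nonneg_right hω_ge ha.le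
  have hKt3 : (0:ℝ) ≤ 2 * Real.pi * (8 * K * t ^ 3 / a) := by positivity
  calc |2 * Real.pi * (a * t - Real.arccos F) / (Real.arccos F * a)|
      = 2 * Real.pi * |a * t - Real.arccos F| / (Real.arccos F * a) := by
        rw [abs_div, abs_of_pos (mul_pos hω0 ha), abs_mul,
          abs_of_pos (by linarith : (0:ℝ) < 2 * Real.pi)]
    _ ≤ 2 * Real.pi * (8 * K * t ^ 3 / a) / (a * t / 2 * a) :=
        div_le_div₀ hKt3 hnum hden1 hden2
    _ = 32 * Real.pi * K / a ^ 3 * t ^ 2 := by field_simp; ring
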